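/- Let d ≥ 1 and let V be a nondegenerate k/κ-hermitian space of dimension 2d+1. Let W' ⊆ V be a special subspace of codimension d−1 (so dim W' = d+2). Then the number of special subspaces W ⊆ V of codimension 1 (i.e. dim W = 2d and W⊥ ⊆ W) with W' ⊆ W equals (q^{2(d−1)} − 1)/(q² − 1) = 1 + q² + q⁴ + ⋯ + q^{2(d−2)}; equivalently, W ↦ W⊥ is a bijection from this set onto the set of all lines in the (d−1)-dimensional totally isotropic subspace W'⊥. -/

import Mathlib

open Module

variable {k : Type*} [Field k] {V : Type*} [AddCommGroup V] [Module k V]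

/-- The orthogonal complement `U⊥ = {x : (x, u) = 0 for all u ∈ U}` of a subspace with
respect to a sesquilinear form (linear in the first variable). -/
def perp {σ : k →+* k} (h : V →ₗ[k] V →ₛₗ[σ] k) (U : Submodule k V) : Submodule k V where
  carrier := {x | ∀ u ∈ U, h x u = 0}
  add_mem' := by
    intro x y hx hy u hu
    simp [hx u hu, hy u hu]
  zero_mem' := by
    intro u hu
    simp
  smul_mem' := by
    intro a x hx u hu
    simp [hx u hu]

section Aux

variable {σ : k →+* k}

lemma mem_perp (h : V →ₗ[k] V →ₛₗ[σ] k) {U : Submodule k V} {x : V} :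
    x ∈ perp h U ↔ ∀ u ∈ U, h x u = 0 := Iff.rfl

lemma perp_anti (h : V →ₗ[k] V →ₛₗ[σ] k) {U₁ U₂ : Submodule k V} (hU : U₁ ≤ U₂) :
    perp h U₂ ≤ perp h U₁ :=
  fun _ hx u hu => hx u (hU hu)

/-- Push a linear functional forward along `σ` to get a `σ`-semilinear one. -/
def semidualOf (σ : k →+* k) (f : Module.Dual k V) : V →ₛₗ[σ] k where
  toFun x := σ (f x)
  map_add' x y := by simp
  map_smul' c x := by simp

/-- Pull a `σ`-semilinear functional back along `σ⁻¹` to get a linear one. -/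
def semidualBack (σe : k ≃+* k) (g : V →ₛₗ[(σe : k →+* k)] k) : Module.Dual k V where
  toFun x := σe.symm (g x)
  map_add' x y := by simp
  map_smul' c x := by
    simp only [LinearMap.map_smulₛₗ, smul_eq_mul, map_mul, RingHom.id_apply]
    congr 1
    exact σe.symm_apply_apply c

/-- The equivalence between the dual and the `σ`-semilinear dual. -/
noncomputable def semidualEquiv (σ : k →+* k) (hbij : Function.Bijective σ) :
    Module.Dual k V ≃+ (V →ₛₗ[σ] k) where
  toFun := semidualOf σ
  invFun g := semidualBack (RingEquiv.ofBijective σ hbij) g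
  left_inv f := by
    ext x
    exact (RingEquiv.ofBijective σ hbij).symm_apply_apply (f x)
  right_inv g := by
    ext x
    exact (RingEquiv.ofBijective σ hbij).apply_symm_apply (g x)
  map_add' f g := by ext x; simp [semidualOf, semidualBack]

@[simp] lemma semidualEquiv_apply (σ : k →+* k) (hbij : Function.Bijective σ)
    (f : Module.Dual k V) (x : V) : semidualEquiv σ hbij f x = σ (f x) := rfl

lemma rank_semidual (hbij : Function.Bijective σ) :
    Module.rank k (Module.Dual k V) = Module.rank k (V →ₛₗ[σ] k) := by
  refine rank_eq_of_equiv_equiv ⇑σ (semidualEquiv σ hbij) hbij ?_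
  intro r m
  ext x
  show σ ((r • m) x) = σ r * σ (m x)
  rw [LinearMap.smul_apply, smul_eq_mul, map_mul]

/-- The semilinear dual has the same finrank as the dual. -/
lemma finrank_semilinear_dual (hbij : Function.Bijective σ) [FiniteDimensional k V] :
    finrank k (V →ₛₗ[σ] k) = finrank k V := by
  have hfr : finrank k (Module.Dual k V) = finrank k (V →ₛₗ[σ] k) := by
    simp only [finrank, rank_semidual hbij]
  rw [← hfr, Subspace.dual_finrank_eq]

lemma fd_semidual (hbij : Function.Bijective σ) [FiniteDimensional k V] :
    FiniteDimensional k (V →ₛₗ[σ] k) := by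
  refine FiniteDimensional.of_rank_eq_nat (n := finrank k V) ?_
  rw [← rank_semidual hbij, ← Subspace.dual_finrank_eq (V := V), finrank_eq_rank]

end Aux

section Perp

variable (σ : k →+* k) (hbij : Function.Bijective σ) (h : V →ₗ[k] V →ₛₗ[σ] k)
  (hnd : ∀ x : V, (∀ y : V, h x y = 0) → x = 0) [FiniteDimensional k V]

include hbij hnd in
lemma finrank_perp (U : Submodule k V) :
    finrank k (perp h U) + finrank k U = finrank k V := by
  have hfdV : FiniteDimensional k (V →ₛₗ[σ] k) := fd_semidual hbij
  -- `h`, viewed as a map to the semilinear dual, is surjective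
  have hinj : Function.Injective h := by
    rw [← LinearMap.ker_eq_bot, Submodule.eq_bot_iff]
    intro x hx
    exact hnd x fun y => by rw [LinearMap.mem_ker.mp hx]; rfl
  have hsurj : Function.Surjective h :=
    (LinearMap.injective_iff_surjective_of_finrank_eq_finrank
      (finrank_semilinear_dual hbij).symm).mp hinj
  have hfdU : FiniteDimensional k (↥U →ₛₗ[σ] k) := fd_semidual hbij
  -- the restriction-to-U map
  let Ψ : V →ₗ[k] (U →ₛₗ[σ] k) :=
    { toFun := fun x => (h x).comp U.subtype
      map_add' := by intro x y; ext u; simp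
      map_smul' := by intro c x; ext u; simp }
  have hΨsurj : Function.Surjective Ψ := by
    intro g
    obtain ⟨U', hU'⟩ := Submodule.exists_isCompl U
    obtain ⟨x, hx⟩ := hsurj (g.comp (U.projectionOnto U' hU'))
    refine ⟨x, ?_⟩
    ext u
    simp [Ψ, hx, Submodule.projectionOnto_apply_left]
  have hker : LinearMap.ker Ψ = perp h U := by
    ext x
    simp only [LinearMap.mem_ker, mem_perp]
    constructor
    · intro hx u hu
      have := congrArg (fun f => f ⟨u, hu⟩) (show Ψ x = 0 from hx)
      simpa [Ψ] using this
    · intro hx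
      ext u
      simpa [Ψ] using hx u u.2
  have := LinearMap.finrank_range_add_finrank_ker Ψ
  rw [hker, LinearMap.range_eq_top.mpr hΨsurj, finrank_top] at this
  rw [add_comm, ← finrank_semilinear_dual (V := U) hbij]
  exact this

end Perp

section Perp2

variable (σ : k →+* k) (hbij : Function.Bijective σ) (h : V →ₗ[k] V →ₛₗ[σ] k)
  (hnd : ∀ x : V, (∀ y : V, h x y = 0) → x = 0)
  (hherm : ∀ x y : V, h x y = σ (h y x)) [FiniteDimensional k V]

include hherm in
lemma le_perp_perp (U : Submodule k V) : U ≤ perp h (perp h U) := by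
  intro x hx u hu
  rw [hherm, hu x hx, map_zero]

include hbij hnd hherm in
lemma perp_perp (U : Submodule k V) : perp h (perp h U) = U := by
  refine (Submodule.eq_of_le_of_finrank_eq (le_perp_perp σ h hherm U) ?_).symm
  have h1 := finrank_perp σ hbij h hnd U
  have h2 := finrank_perp σ hbij h hnd (perp h U)
  omega

end Perp2

section Count

variable [Fintype k]

private lemma geom_sum_nat (c n : ℕ) (hc : 1 ≤ c) :
    (∑ i ∈ Finset.range n, c ^ i) * (c - 1) + 1 = c ^ n := by
  induction n with
  | zero => simp
  | succ n ih =>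
    rw [Finset.sum_range_succ, add_mul, pow_succ]
    have h1 : 1 ≤ c ^ n := Nat.one_le_pow _ _ hc
    have h2 : c ^ n * (c - 1) = c ^ n * c - c ^ n := by
      rw [Nat.mul_sub_one]
    have h3 : c ^ n ≤ c ^ n * c := Nat.le_mul_of_pos_right _ (by omega)
    omega

lemma card_ne_zero_subtype {α : Type*} [Fintype α] [DecidableEq α] (a : α) :
    Fintype.card {x : α // x ≠ a} = Fintype.card α - 1 := by
  have h1 := Fintype.card_subtype_compl (fun x : α => x = a)
  have h2 := Fintype.card_subtype_eq a
  rw [Fintype.card_subtype_eq a] at h1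
  convert h1 using 2

lemma card_lines_mul {M : Type*} [AddCommGroup M] [Module k M] [FiniteDimensional k M] :
    Nat.card {L : Submodule k M // finrank k L = 1} * (Fintype.card k - 1) + 1
      = Fintype.card k ^ finrank k M := by
  have hfin : Finite M := Module.finite_of_finite k
  cases nonempty_fintype M
  have : Finite (Submodule k M) :=
    Finite.of_injective (fun L => (L : Set M)) SetLike.coe_injective
  classical
  have key : Fintype.card {v : M // v ≠ 0}
      = Nat.card {L : Submodule k M // finrank k L = 1} * (Fintype.card k - 1) := by
    rw [Nat.card_eq_fintype_card]
    have := Finset.card_eq_sum_card_fiberwise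
      (f := fun v : {v : M // v ≠ 0} =>
        (⟨Submodule.span k {v.1}, finrank_span_singleton v.2⟩ :
          {L : Submodule k M // finrank k L = 1}))
      (s := Finset.univ) (t := Finset.univ) (fun v _ => Finset.mem_univ _)
    rw [← Finset.card_univ, this]
    rw [Finset.sum_congr rfl (fun L _ => ?_), Finset.sum_const, Finset.card_univ, smul_eq_mul]
    -- fiber over L has card `card k - 1`
    have e : {v : {v : M // v ≠ 0} // Submodule.span k {v.1} = L.1} ≃ {w : L.1 // w ≠ 0} :=
      { toFun := fun v => ⟨⟨v.1.1, le_of_eq v.2 (Submodule.mem_span_singleton_self _)⟩,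
          fun hw => v.1.2 (by simpa using congrArg Subtype.val hw)⟩
        invFun := fun w => ⟨⟨w.1.1, fun hz => w.2 (Subtype.ext hz)⟩,
          Submodule.eq_of_le_of_finrank_eq
            ((Submodule.span_singleton_le_iff_mem _ _).mpr w.1.2)
            (by rw [finrank_span_singleton (fun hz => w.2 (Subtype.ext hz)), L.2])⟩
        left_inv := fun v => Subtype.ext (Subtype.ext rfl)
        right_inv := fun w => Subtype.ext (Subtype.ext rfl) }
    have hL : Fintype.card {w : L.1 // w ≠ 0} = Fintype.card k - 1 := by
      rw [card_ne_zero_subtype (0 : L.1), card_eq_pow_finrank (K := k) (V := L.1), L.2, pow_one]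
    rw [← hL, ← Fintype.card_congr e, Fintype.card_subtype]
    congr 1
    apply Finset.filter_congr
    intro v _
    simp [Subtype.ext_iff]
  have hM : Fintype.card {v : M // v ≠ 0} = Fintype.card k ^ finrank k M - 1 := by
    rw [card_ne_zero_subtype (0 : M), card_eq_pow_finrank (K := k) (V := M)]
  have hpow : 1 ≤ Fintype.card k ^ finrank k M :=
    Nat.one_le_pow _ _ Fintype.card_pos
  omega

lemma card_lines {M : Type*} [AddCommGroup M] [Module k M] [FiniteDimensional k M] :
    Nat.card {L : Submodule k M // finrank k L = 1}
      = ∑ i ∈ Finset.range (finrank k M), Fintype.card k ^ i := by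
  have h1 := card_lines_mul (k := k) (M := M)
  have h2 := geom_sum_nat (Fintype.card k) (finrank k M) Fintype.card_pos
  have hc : 2 ≤ Fintype.card k := Fintype.one_lt_card
  have := h1.trans h2.symm
  have hpos : 0 < Fintype.card k - 1 := by omega
  exact Nat.eq_of_mul_eq_mul_right hpos (by omega)

end Count

/-- Let `V` be a nondegenerate `k/κ`-hermitian space of dimension `2d+1`
and `W' ⊆ V` a special subspace of codimension `d-1`. The number of special subspaces `W`
of codimension `1` with `W' ⊆ W` equals `1 + q² + ⋯ + q^{2(d-2)}`; equivalently, `W ↦ W⊥`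
is a bijection from this set onto the set of all lines in the totally isotropic subspace
`W'⊥`. -/
theorem card_special_hyperplanes_containing (q d : ℕ) (hd : 1 ≤ d)
    [Fintype k] (hcard : Fintype.card k = q ^ 2)
    [FiniteDimensional k V] (hdim : finrank k V = 2 * d + 1)
    (σ : k →+* k) (hσ : ∀ x : k, σ x = x ^ q)
    (h : V →ₗ[k] V →ₛₗ[σ] k)
    (hherm : ∀ x y : V, h x y = σ (h y x))
    (hnd : ∀ x : V, (∀ y : V, h x y = 0) → x = 0)
    (W' : Submodule k V) (hW' : perp h W' ≤ W') (hW'dim : finrank k W' = d + 2) :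
    Nat.card {W : Submodule k V | finrank k W = 2 * d ∧ perp h W ≤ W ∧ W' ≤ W} =
      ∑ i ∈ Finset.range (d - 1), q ^ (2 * i) ∧
    Set.BijOn (perp h)
      {W : Submodule k V | finrank k W = 2 * d ∧ perp h W ≤ W ∧ W' ≤ W}
      {L : Submodule k V | finrank k L = 1 ∧ L ≤ perp h W'} := by
  classical
  have hbij : Function.Bijective σ := Finite.injective_iff_bijective.mp σ.injective
  set S : Set (Submodule k V) := {W | finrank k W = 2 * d ∧ perp h W ≤ W ∧ W' ≤ W} with hS
  set E : Submodule k V := perp h W' with hE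
  have hEdim : finrank k E = d - 1 := by
    have := finrank_perp σ hbij h hnd W'
    rw [hW'dim, hdim, ← hE] at this
    omega
  have hbijOn : Set.BijOn (perp h) S {L : Submodule k V | finrank k L = 1 ∧ L ≤ E} := by
    refine ⟨?_, ?_, ?_⟩
    · rintro W ⟨hW1, _, hW3⟩
      refine ⟨?_, perp_anti h hW3⟩
      have := finrank_perp σ hbij h hnd W
      rw [hW1, hdim] at this
      omega
    · intro W₁ _ W₂ _ heq
      have := congrArg (perp h) heq
      rwa [perp_perp σ hbij h hnd hherm W₁, perp_perp σ hbij h hnd hherm W₂] at this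
    · rintro L ⟨hL1, hL2⟩
      refine ⟨perp h L, ⟨?_, ?_, ?_⟩, perp_perp σ hbij h hnd hherm L⟩
      · have := finrank_perp σ hbij h hnd L
        rw [hL1, hdim] at this
        omega
      · rw [perp_perp σ hbij h hnd hherm L]
        intro x hx u hu
        exact (hL2 hx) u (hW' (hL2 hu))
      · intro w hw u hu
        rw [hherm w u, (hL2 hu) w hw, map_zero]
  refine ⟨?_, hbijOn⟩
  have hcardeq : Nat.card S = Nat.card {L : Submodule k V | finrank k L = 1 ∧ L ≤ E} := by
    rw [Nat.card_coe_set_eq, Nat.card_coe_set_eq, ← hbijOn.image_eq,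
      Set.ncard_image_of_injOn hbijOn.injOn]
  rw [hcardeq]
  have e1 : {L : Submodule k V | finrank k L = 1 ∧ L ≤ E}
      ≃ {p : {p' : Submodule k V // p' ≤ E} // finrank k p.1 = 1} :=
    { toFun := fun L => ⟨⟨L.1, L.2.2⟩, L.2.1⟩
      invFun := fun p => ⟨p.1.1, p.2, p.1.2⟩
      left_inv := fun _ => rfl
      right_inv := fun _ => rfl }
  have e3 : {p : {p' : Submodule k V // p' ≤ E} // finrank k p.1 = 1}
      ≃ {L : Submodule k ↥E // finrank k L = 1} := by
    refine Equiv.subtypeEquiv (Submodule.MapSubtype.orderIso E).toEquiv.symm fun a => ?_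
    have hmap : (((Submodule.MapSubtype.orderIso E).symm a : Submodule k ↥E).map E.subtype)
        = a.1 :=
      congrArg Subtype.val ((Submodule.MapSubtype.orderIso E).apply_symm_apply a)
    rw [← hmap, Submodule.finrank_map_subtype_eq]
    exact Iff.rfl
  rw [Nat.card_congr (e1.trans e3), card_lines, hEdim, hcard]
  exact Finset.sum_congr rfl fun i _ => (pow_mul q 2 i).symm
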